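/- Let d ≥ 1 and let f : ℝ^d → ℝ be a bounded measurable function with f(y) ≥ 0 for all y, 0 < ∫_{ℝ^d} f(y) dy < ∞, and f(-y) = f(y) for all y ∈ ℝ^d. Then for every R > 0 there exist n ∈ ℕ (n ≥ 1) and ε > 0 such that the n-fold convolution power satisfies f^{*n}(x) ≥ ε for every x ∈ ℝ^d with ‖x‖ ≤ R. -/

import Mathlib

open MeasureTheory

/-- Auxiliary convolution iterates: `convIter f k = f^{*(k+1)}`, where
`(f*g)(x) = ∫ f(x-y) g(y) dy`. -/
noncomputable def convIter {d : ℕ} (f : EuclideanSpace ℝ (Fin d) → ℝ) :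
    ℕ → EuclideanSpace ℝ (Fin d) → ℝ
  | 0 => f
  | n + 1 => fun x => ∫ y, convIter f n (x - y) * f y

/-- `convPow f n` is the `n`-fold convolution power `f^{*n}` (meaningful for `n ≥ 1`):
`f^{*1} = f` and `f^{*(n+1)} = f^{*n} * f`. -/
noncomputable def convPow {d : ℕ} (f : EuclideanSpace ℝ (Fin d) → ℝ) (n : ℕ) :
    EuclideanSpace ℝ (Fin d) → ℝ :=
  convIter f (n - 1)

open Metric Set Filter
open scoped ENNReal Topology

namespace ConvPowAux

variable {d : ℕ}
local notation "E" => EuclideanSpace ℝ (Fin d)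

lemma integrand_integrable (f g : E → ℝ) (hmeas : Measurable f)
    (hgm : Measurable g) (hnonneg : ∀ y, 0 ≤ f y) (hint : Integrable f)
    {C : ℝ} (hgC : ∀ x, |g x| ≤ C) (x : E) :
    Integrable (fun y => g (x - y) * f y) := by
  refine (hint.const_mul C).mono' ?_ ?_
  · exact ((hgm.comp (measurable_const.sub measurable_id)).mul hmeas).aestronglyMeasurable
  · refine Filter.Eventually.of_forall fun y => ?_
    have h1 : |g (x - y) * f y| = |g (x - y)| * f y := by
      rw [abs_mul, abs_of_nonneg (hnonneg y)]
    rw [Real.norm_eq_abs, h1]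
    exact mul_le_mul_of_nonneg_right (hgC _) (hnonneg y)

lemma convIter_props (f : E → ℝ) (hmeas : Measurable f)
    (hnonneg : ∀ y, 0 ≤ f y) (hint : Integrable f) {C₀ : ℝ} (hC₀ : ∀ y, f y ≤ C₀) :
    ∀ n, Measurable (convIter f n) ∧ (∀ x, 0 ≤ convIter f n x) ∧
      ∃ C : ℝ, 0 ≤ C ∧ ∀ x, convIter f n x ≤ C := by
  intro n
  induction n with
  | zero =>
    exact ⟨hmeas, hnonneg, max C₀ 0, le_max_right _ _,
      fun x => le_max_of_le_left (hC₀ x)⟩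
  | succ n ih =>
    obtain ⟨hm, hn0, C, hC0, hC⟩ := ih
    have hmeas' : Measurable (convIter f (n + 1)) := by
      have : StronglyMeasurable fun p : (EuclideanSpace ℝ (Fin d)) × (EuclideanSpace ℝ (Fin d)) =>
          convIter f n (p.1 - p.2) * f p.2 :=
        ((hm.comp (measurable_fst.sub measurable_snd)).mul
          (hmeas.comp measurable_snd)).stronglyMeasurable
      exact (StronglyMeasurable.integral_prod_right' (f := fun p : _ × _ =>
        convIter f n (p.1 - p.2) * f p.2) this).measurable
    refine ⟨hmeas', fun x => integral_nonneg fun y => mul_nonneg (hn0 _) (hnonneg _), ?_⟩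
    refine ⟨C * ∫ y, f y, mul_nonneg hC0 (integral_nonneg hnonneg), fun x => ?_⟩
    show (∫ y, convIter f n (x - y) * f y) ≤ C * ∫ y, f y
    rw [← MeasureTheory.integral_const_mul]
    refine integral_mono_of_nonneg
      (Filter.Eventually.of_forall fun y => mul_nonneg (hn0 _) (hnonneg _))
      (hint.const_mul C) (Filter.Eventually.of_forall fun y => ?_)
    exact mul_le_mul_of_nonneg_right (hC _) (hnonneg y)

lemma geom_lemma {x : E} {r δ : ℝ} (hδ : 0 < δ)
    (hr : δ / 4 ≤ r) (hx : ‖x‖ ≤ r + δ / 2) :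
    ∃ w : E, ‖w‖ ≤ 3 * δ / 4 ∧ ‖x - w‖ ≤ r - δ / 4 := by
  by_cases h : ‖x‖ ≤ r - δ / 4
  · exact ⟨0, by simp; positivity, by simpa using h⟩
  · push_neg at h
    have hxpos : 0 < ‖x‖ := lt_of_le_of_lt (by linarith) h
    refine ⟨(1 - (r - δ / 4) / ‖x‖) • x, ?_, ?_⟩
    · rw [norm_smul, Real.norm_eq_abs]
      have h1 : 0 ≤ 1 - (r - δ / 4) / ‖x‖ := by
        rw [sub_nonneg, div_le_one hxpos]; exact h.le
      rw [abs_of_nonneg h1, sub_mul, one_mul, div_mul_cancel₀ _ hxpos.ne']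
      linarith
    · have : x - (1 - (r - δ / 4) / ‖x‖) • x = ((r - δ / 4) / ‖x‖) • x := by
        rw [sub_smul, one_smul]; abel
      rw [this, norm_smul, Real.norm_eq_abs, abs_of_nonneg (div_nonneg (by linarith) hxpos.le),
        div_mul_cancel₀ _ hxpos.ne']

lemma step_lemma (f g : E → ℝ) (hmeas : Measurable f) (hnonneg : ∀ y, 0 ≤ f y)
    (hint : Integrable f)
    {B : Set E} (hB : MeasurableSet B) (hBfin : volume B < ⊤)
    {a : ℝ} (ha : 0 ≤ a) (hfB : ∀ y ∈ B, a ≤ f y)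
    {δ : ℝ} (hδ : 0 < δ) {p : E}
    (hp : volume (closedBall p δ \ B) ≤ volume (closedBall (0 : E) (δ / 4)) / 2)
    (hgm : Measurable g) (hg0 : ∀ x, 0 ≤ g x) {C : ℝ} (hgC : ∀ x, g x ≤ C)
    {c : ℝ} (hc : 0 ≤ c) {z : E} {r : ℝ} (hr : δ / 4 ≤ r)
    (hglb : ∀ x ∈ closedBall z r, c ≤ g x) :
    ∀ x ∈ closedBall (z + p) (r + δ / 2),
      c * a * (volume (closedBall (0 : E) (δ / 4)) / 2).toReal ≤ ∫ y, g (x - y) * f y := by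
  intro x hx
  set V : ℝ≥0∞ := volume (closedBall (0 : E) (δ / 4)) with hV
  have hVfin : V < ⊤ := measure_closedBall_lt_top
  have hx' : ‖x - z - p‖ ≤ r + δ / 2 := by
    have := mem_closedBall_iff_norm.1 hx
    simpa [sub_sub] using this
  obtain ⟨w₀, hw₀1, hw₀2⟩ := geom_lemma hδ hr hx'
  set w : E := p + w₀ with hw
  have hsub1 : closedBall w (δ / 4) ⊆ closedBall p δ := by
    apply closedBall_subset_closedBall'
    rw [dist_eq_norm]
    have h : w - p = w₀ := by rw [hw]; abel
    rw [h]; linarith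
  have hsub2 : closedBall w (δ / 4) ⊆ closedBall (x - z) r := by
    apply closedBall_subset_closedBall'
    rw [dist_eq_norm]
    have h : ‖w - (x - z)‖ = ‖x - z - p - w₀‖ := by
      rw [hw, ← norm_neg]; congr 1; abel
    rw [h]; linarith [hw₀2]
  set S : Set E := B ∩ closedBall (x - z) r with hS
  have hSmeas : MeasurableSet S := hB.inter measurableSet_closedBall
  have hSfin : volume S < ⊤ := lt_of_le_of_lt (measure_mono inter_subset_left) hBfin
  have hVw : volume (closedBall w (δ / 4)) = V := by
    rw [hV]; exact Measure.addHaar_closedBall_center volume w (δ / 4)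
  have hmS : V / 2 ≤ volume S := by
    have h1 : volume (closedBall w (δ / 4) ∩ B) + volume (closedBall w (δ / 4) \ B)
        = volume (closedBall w (δ / 4)) := measure_inter_add_diff _ hB
    have h2 : volume (closedBall w (δ / 4) \ B) ≤ V / 2 :=
      le_trans (measure_mono (diff_subset_diff_left hsub1)) hp
    have h3 : V ≤ volume (closedBall w (δ / 4) ∩ B) + V / 2 := by
      calc V = volume (closedBall w (δ / 4) ∩ B) + volume (closedBall w (δ / 4) \ B) := by
            rw [h1, hVw]
        _ ≤ volume (closedBall w (δ / 4) ∩ B) + V / 2 := add_le_add_right h2 _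
    have h4 : V / 2 ≤ volume (closedBall w (δ / 4) ∩ B) := by
      rw [← ENNReal.sub_half hVfin.ne]
      exact tsub_le_iff_right.2 h3
    exact h4.trans (measure_mono fun y hy => ⟨hy.2, hsub2 hy.1⟩)
  have hind : Integrable (S.indicator fun _ => c * a) :=
    IntegrableOn.integrable_indicator (integrableOn_const hSfin.ne) hSmeas
  have hintg : Integrable (fun y => g (x - y) * f y) := by
    refine integrand_integrable f g hmeas hgm hnonneg hint (C := max C 0) (fun t => ?_) x
    rw [abs_of_nonneg (hg0 t)]; exact le_max_of_le_left (hgC t)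
  have hle : ∀ y, S.indicator (fun _ => c * a) y ≤ g (x - y) * f y := by
    intro y
    by_cases hy : y ∈ S
    · rw [indicator_of_mem hy]
      obtain ⟨hyB, hyball⟩ := hy
      have h5 : x - y ∈ closedBall z r := by
        rw [mem_closedBall_iff_norm] at hyball ⊢
        rw [← norm_neg]; convert hyball using 2; rfl; abel
      exact mul_le_mul (hglb _ h5) (hfB y hyB) ha (hg0 _)
    · rw [indicator_of_notMem hy]
      exact mul_nonneg (hg0 _) (hnonneg _)
  calc c * a * (V / 2).toReal ≤ c * a * (volume S).toReal := by
        apply mul_le_mul_of_nonneg_left _ (mul_nonneg hc ha)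
        exact ENNReal.toReal_le_toReal (by simp [hVfin.ne, ENNReal.div_eq_top]) hSfin.ne |>.2 hmS
    _ = ∫ y, S.indicator (fun _ => c * a) y := by
        rw [integral_indicator_const _ hSmeas]; simp [mul_comm, Measure.real]
    _ ≤ ∫ y, g (x - y) * f y := integral_mono hind hintg hle

lemma base_lemma (f : E → ℝ) (hmeas : Measurable f) (hnonneg : ∀ y, 0 ≤ f y)
    (hint : Integrable f) {C₀ : ℝ} (hC₀ : ∀ y, f y ≤ C₀)
    {B : Set E} (hB : MeasurableSet B) (hBfin : volume B < ⊤)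
    {a : ℝ} (ha : 0 ≤ a) (hfB : ∀ y ∈ B, a ≤ f y)
    {δ : ℝ} (hδ : 0 < δ) {x₀ : E}
    (hsmall : volume (closedBall x₀ δ \ B) + volume (closedBall (-x₀) (2 * δ) \ B)
      ≤ volume (closedBall (0 : E) δ) / 2) :
    ∀ x ∈ closedBall (0 : E) δ,
      a * a * (volume (closedBall (0 : E) δ) / 2).toReal ≤ ∫ y, f (x - y) * f y := by
  intro x hx
  set W : ℝ≥0∞ := volume (closedBall (0 : E) δ) with hW
  have hWfin : W < ⊤ := measure_closedBall_lt_top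
  have hxn : ‖x‖ ≤ δ := mem_closedBall_zero_iff.1 hx
  set S : Set E := B ∩ closedBall x₀ δ ∩ ((fun y => x - y) ⁻¹' B) with hSdef
  have hsubmeas : Measurable fun y : E => x - y := measurable_const.sub measurable_id
  have hSmeas : MeasurableSet S := (hB.inter measurableSet_closedBall).inter (hsubmeas hB)
  have hSfin : volume S < ⊤ :=
    lt_of_le_of_lt (measure_mono (fun y hy => hy.1.1)) hBfin
  have hT : volume (closedBall x₀ δ ∩ ((fun y => x - y) ⁻¹' B)ᶜ)
      ≤ volume (closedBall (-x₀) (2 * δ) \ B) := by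
    have hpre : closedBall x₀ δ ∩ ((fun y => x - y) ⁻¹' B)ᶜ
        = (fun y : E => x - y) ⁻¹' (closedBall (x - x₀) δ ∩ Bᶜ) := by
      ext y
      simp only [mem_inter_iff, mem_closedBall, mem_preimage, mem_compl_iff]
      constructor
      · rintro ⟨h1, h2⟩
        refine ⟨?_, h2⟩
        rw [dist_eq_norm] at h1 ⊢
        rw [show x - y - (x - x₀) = x₀ - y by abel, ← norm_neg]
        convert h1 using 2; rfl; abel
      · rintro ⟨h1, h2⟩
        refine ⟨?_, h2⟩
        rw [dist_eq_norm] at h1 ⊢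
        rw [show x - y - (x - x₀) = x₀ - y by abel] at h1
        rw [← norm_neg]; convert h1 using 2; rfl; abel
    rw [hpre, (Measure.measurePreserving_sub_left volume x).measure_preimage
      ((measurableSet_closedBall.inter hB.compl).nullMeasurableSet)]
    refine measure_mono fun u hu => ⟨?_, hu.2⟩
    have := hu.1
    rw [mem_closedBall] at this ⊢
    calc dist u (-x₀) ≤ dist u (x - x₀) + dist (x - x₀) (-x₀) := dist_triangle _ _ _
      _ ≤ δ + ‖x‖ := by
          refine add_le_add this ?_
          rw [dist_eq_norm, show x - x₀ - -x₀ = x from by abel]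
      _ ≤ 2 * δ := by linarith
  have hcover : closedBall x₀ δ ⊆ S ∪ ((closedBall x₀ δ \ B)
      ∪ (closedBall x₀ δ ∩ ((fun y => x - y) ⁻¹' B)ᶜ)) := by
    intro y hy
    by_cases h1 : y ∈ B
    · by_cases h2 : x - y ∈ B
      · exact Or.inl ⟨⟨h1, hy⟩, h2⟩
      · exact Or.inr (Or.inr ⟨hy, h2⟩)
    · exact Or.inr (Or.inl ⟨hy, h1⟩)
  have hmS : W / 2 ≤ volume S := by
    have h1 : W ≤ volume S + W / 2 := by
      calc W = volume (closedBall x₀ δ) := (Measure.addHaar_closedBall_center volume x₀ δ).symm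
        _ ≤ volume S + (volume (closedBall x₀ δ \ B)
            + volume (closedBall x₀ δ ∩ ((fun y => x - y) ⁻¹' B)ᶜ)) :=
          le_trans (measure_mono hcover) (le_trans (measure_union_le _ _)
            (add_le_add_right (measure_union_le _ _) _))
        _ ≤ volume S + W / 2 := by
          refine add_le_add_right (le_trans (add_le_add_right hT _) hsmall) _
    rw [← ENNReal.sub_half hWfin.ne]
    exact tsub_le_iff_right.2 h1
  have hind : Integrable (S.indicator fun _ => a * a) :=
    IntegrableOn.integrable_indicator (integrableOn_const hSfin.ne) hSmeas
  have hintg : Integrable (fun y => f (x - y) * f y) := by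
    refine ((hint.const_mul (max C₀ 0)).mono'
      ((hmeas.comp hsubmeas).mul hmeas).aestronglyMeasurable
      (Filter.Eventually.of_forall fun y => ?_))
    rw [Real.norm_eq_abs, abs_mul, abs_of_nonneg (hnonneg _), abs_of_nonneg (hnonneg _)]
    exact mul_le_mul_of_nonneg_right (le_max_of_le_left (hC₀ _)) (hnonneg y)
  have hle : ∀ y, S.indicator (fun _ => a * a) y ≤ f (x - y) * f y := by
    intro y
    by_cases hy : y ∈ S
    · rw [indicator_of_mem hy]
      exact mul_le_mul (hfB _ hy.2) (hfB _ hy.1.1) ha (hnonneg _)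
    · rw [indicator_of_notMem hy]
      exact mul_nonneg (hnonneg _) (hnonneg _)
  calc a * a * (W / 2).toReal ≤ a * a * (volume S).toReal := by
        refine mul_le_mul_of_nonneg_left ?_ (mul_nonneg ha ha)
        exact (ENNReal.toReal_le_toReal (by simp [hWfin.ne, ENNReal.div_eq_top]) hSfin.ne).2 hmS
    _ = ∫ y, S.indicator (fun _ => a * a) y := by
        rw [integral_indicator_const _ hSmeas]; simp [mul_comm, Measure.real]
    _ ≤ ∫ y, f (x - y) * f y := integral_mono hind hintg hle

lemma density_small {B : Set E} (hB : MeasurableSet B) {x₀ : E} {η : ℝ≥0∞}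
    (hη : 0 < η) (hη1 : η ≤ 1)
    (htend : Tendsto (fun r => volume (B ∩ closedBall x₀ r) / volume (closedBall x₀ r))
      (𝓝[>] 0) (𝓝 1)) :
    ∃ ε > (0:ℝ), ∀ r, 0 < r → r < ε →
      volume (closedBall x₀ r \ B) ≤ η * volume (closedBall x₀ r) := by
  have h1 : {r : ℝ | 1 - η < volume (B ∩ closedBall x₀ r) / volume (closedBall x₀ r)}
      ∈ 𝓝[>] (0:ℝ) := by
    refine htend (?_ : Ioi (1 - η) ∈ 𝓝 1)
    exact Ioi_mem_nhds (ENNReal.sub_lt_self ENNReal.one_ne_top one_ne_zero hη.ne')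
  rw [mem_nhdsGT_iff_exists_Ioo_subset] at h1
  obtain ⟨u, hu, hsub⟩ := h1
  refine ⟨u, hu, fun r hr hru => ?_⟩
  have hmem := hsub ⟨hr, hru⟩
  have hcb0 : volume (closedBall x₀ r) ≠ 0 := (measure_closedBall_pos volume x₀ hr).ne'
  have hcbt : volume (closedBall x₀ r) ≠ ⊤ := measure_closedBall_lt_top.ne
  have h2 : (1 - η) * volume (closedBall x₀ r) ≤ volume (closedBall x₀ r ∩ B) := by
    rw [inter_comm]
    exact (ENNReal.le_div_iff_mul_le (Or.inl hcb0) (Or.inl hcbt)).1 (le_of_lt hmem)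
  have hfin : volume (closedBall x₀ r ∩ B) ≠ ⊤ :=
    (lt_of_le_of_lt (measure_mono inter_subset_left) measure_closedBall_lt_top).ne
  have hkey : (1 - (1 - η)) * volume (closedBall x₀ r)
      = volume (closedBall x₀ r) - (1 - η) * volume (closedBall x₀ r) := by
    rw [ENNReal.sub_mul (fun _ _ => hcbt), one_mul]
  rw [ENNReal.sub_sub_cancel ENNReal.one_ne_top hη1] at hkey
  calc volume (closedBall x₀ r \ B)
      = volume (closedBall x₀ r) - volume (closedBall x₀ r ∩ B) := by
        rw [← diff_self_inter]
        exact measure_diff inter_subset_left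
          (measurableSet_closedBall.inter hB).nullMeasurableSet hfin
    _ ≤ volume (closedBall x₀ r) - (1 - η) * volume (closedBall x₀ r) :=
        tsub_le_tsub_left h2 _
    _ = η * volume (closedBall x₀ r) := hkey.symm

lemma ofReal_mul_le_half {s t : ℝ} (hs : 0 ≤ s) (h : 2 * s ≤ t) (ι : ℝ≥0∞) :
    ENNReal.ofReal s * ι ≤ ENNReal.ofReal t * ι / 2 := by
  rw [ENNReal.le_div_iff_mul_le (Or.inl two_ne_zero) (Or.inl ENNReal.ofNat_ne_top)]
  calc ENNReal.ofReal s * ι * 2 = ENNReal.ofReal s * 2 * ι := by ring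
    _ ≤ ENNReal.ofReal t * ι := by
        refine mul_le_mul_left ?_ ι
        rw [show (2:ℝ≥0∞) = ENNReal.ofReal 2 by simp, ← ENNReal.ofReal_mul hs]
        exact ENNReal.ofReal_le_ofReal (by linarith)

end ConvPowAux

open ConvPowAux

set_option maxHeartbeats 2000000

/-- If `f : ℝ^d → ℝ` is bounded, measurable, nonnegative, symmetric and has a positive
finite integral, then for every `R > 0` some convolution power `f^{*n}` is bounded below
by a positive constant on the ball of radius `R`. -/
theorem convPow_pos_on_ball {d : ℕ} (hd : 1 ≤ d) (f : EuclideanSpace ℝ (Fin d) → ℝ)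
    (hmeas : Measurable f) (hbdd : ∃ C : ℝ, ∀ y, f y ≤ C)
    (hnonneg : ∀ y, 0 ≤ f y)
    (hpos : 0 < ∫⁻ y, ENNReal.ofReal (f y))
    (hfin : (∫⁻ y, ENNReal.ofReal (f y)) < ⊤)
    (hsymm : ∀ y, f (-y) = f y)
    (R : ℝ) (hR : 0 < R) :
    ∃ n : ℕ, 1 ≤ n ∧ ∃ ε : ℝ, 0 < ε ∧
      ∀ x : EuclideanSpace ℝ (Fin d), ‖x‖ ≤ R → ε ≤ convPow f n x := by
  classical
  obtain ⟨C₀, hC₀⟩ := hbdd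
  have hIntf : Integrable f := by
    refine ⟨hmeas.aestronglyMeasurable, ?_⟩
    rw [hasFiniteIntegral_iff_ofReal (Filter.Eventually.of_forall hnonneg)]
    exact hfin
  -- find a level set of positive measure
  obtain ⟨m, hm⟩ : ∃ m : ℕ, 0 < volume {y : EuclideanSpace ℝ (Fin d) | 1/(m+1:ℝ) ≤ f y} := by
    by_contra hcon
    push_neg at hcon
    have h1 : ∀ m : ℕ, ∀ᵐ y : EuclideanSpace ℝ (Fin d), f y < 1/(m+1:ℝ) := by
      intro m
      rw [ae_iff]
      simpa [not_lt] using nonpos_iff_eq_zero.1 (hcon m)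
    have h2 : ∀ᵐ y : EuclideanSpace ℝ (Fin d), f y ≤ 0 := by
      rw [← ae_all_iff] at h1
      filter_upwards [h1] with y hy
      by_contra hf0
      push_neg at hf0
      obtain ⟨k, hk⟩ := exists_nat_one_div_lt hf0
      exact absurd (hy k) (not_lt.2 hk.le)
    have h3 : (∫⁻ y, ENNReal.ofReal (f y)) = 0 := by
      have hae : ∀ᵐ y : EuclideanSpace ℝ (Fin d), ENNReal.ofReal (f y) = (0:ℝ≥0∞) := by
        filter_upwards [h2] with y hy
        simpa using hy
      rw [lintegral_congr_ae hae, lintegral_zero]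
    exact absurd h3 hpos.ne'
  set a : ℝ := 1/(m+1:ℝ) with ha_def
  have ha : 0 < a := by positivity
  set B : Set (EuclideanSpace ℝ (Fin d)) := {y | a ≤ f y} with hBdef
  have hBmeas : MeasurableSet B := measurableSet_le measurable_const hmeas
  have hfB : ∀ y ∈ B, a ≤ f y := fun y hy => hy
  have hBsymm : ∀ y, y ∈ B ↔ -y ∈ B := fun y => by
    simp only [hBdef, mem_setOf_eq, hsymm]
  have hBpos : 0 < volume B := hm
  have hBfin : volume B < ⊤ := by
    by_contra hcon
    push_neg at hcon
    have htop : volume B = ⊤ := top_le_iff.1 hcon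
    have h4 : ENNReal.ofReal a * volume B ≤ ∫⁻ y, ENNReal.ofReal (f y) := by
      refine le_trans (mul_le_mul_right (measure_mono ?_) _)
        (mul_meas_ge_le_lintegral₀ hmeas.ennreal_ofReal.aemeasurable _)
      exact fun y hy => ENNReal.ofReal_le_ofReal (hfB y hy)
    rw [htop, ENNReal.mul_top (ENNReal.ofReal_pos.2 ha).ne'] at h4
    exact absurd (top_le_iff.1 h4) hfin.ne
  -- density point
  have hbes := Besicovitch.ae_tendsto_measure_inter_div_of_measurableSet
    (volume : Measure (EuclideanSpace ℝ (Fin d))) hBmeas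
  set G : Set (EuclideanSpace ℝ (Fin d)) := {x | Tendsto
    (fun r => volume (B ∩ closedBall x r) / volume (closedBall x r)) (𝓝[>] 0)
    (𝓝 (B.indicator 1 x))} with hGdef
  obtain ⟨x₀, hx₀⟩ : (B ∩ G).Nonempty := by
    refine nonempty_of_measure_ne_zero (μ := volume) (fun h0 => ?_)
    have hGc : volume {x : EuclideanSpace ℝ (Fin d) | ¬ Tendsto
        (fun r => volume (B ∩ closedBall x r) / volume (closedBall x r)) (𝓝[>] 0)
        (𝓝 (B.indicator 1 x))} = 0 := by
      rw [← ae_iff]; exact hbes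
    have hdiff : volume (B \ G) = 0 := measure_mono_null (fun x hx => hx.2) hGc
    have := measure_le_inter_add_diff volume B G
    rw [h0, hdiff, add_zero] at this
    exact absurd (le_antisymm this (by positivity)) hBpos.ne'
  have hx₀B : x₀ ∈ B := hx₀.1
  have htendx₀ : Tendsto
      (fun r => volume (B ∩ closedBall x₀ r) / volume (closedBall x₀ r)) (𝓝[>] 0) (𝓝 1) := by
    have := hx₀.2
    rwa [hGdef, mem_setOf_eq, indicator_of_mem hx₀B, Pi.one_apply] at this
  -- choose η and δ
  set η₀ : ℝ := (4:ℝ)⁻¹^d / 4 with hη₀def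
  have hη₀pos : 0 < η₀ := by positivity
  have hη₀le : η₀ ≤ 1 := by
    have : (4:ℝ)⁻¹^d ≤ 1 := pow_le_one₀ (by norm_num) (by norm_num)
    linarith
  obtain ⟨ε, hε, hdens⟩ := density_small hBmeas (ENNReal.ofReal_pos.2 hη₀pos)
    (ENNReal.ofReal_le_one.2 hη₀le) htendx₀
  set δ : ℝ := ε / 3 with hδdef
  have hδ : 0 < δ := by positivity
  set ι : ℝ≥0∞ := volume (ball (0:EuclideanSpace ℝ (Fin d)) 1) with hιdef
  have hvol : ∀ r : ℝ, 0 ≤ r →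
      volume (closedBall (0:EuclideanSpace ℝ (Fin d)) r) = ENNReal.ofReal (r^d) * ι := by
    intro r hr
    rw [Measure.addHaar_closedBall volume 0 hr, finrank_euclideanSpace_fin]
  have hnegeq : ∀ r : ℝ, volume (closedBall (-x₀) r \ B) = volume (closedBall x₀ r \ B) := by
    intro r
    have hset : (Neg.neg ⁻¹' (closedBall x₀ r \ B) : Set (EuclideanSpace ℝ (Fin d)))
        = closedBall (-x₀) r \ B := by
      ext y
      simp only [mem_preimage, mem_diff, mem_closedBall]
      have hnn : dist (-y) x₀ = dist y (-x₀) := by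
        rw [dist_eq_norm, dist_eq_norm, ← norm_neg]
        congr 1; abel
      constructor
      · rintro ⟨h1, h2⟩
        exact ⟨by rwa [hnn] at h1, fun hy => h2 ((hBsymm y).1 hy)⟩
      · rintro ⟨h1, h2⟩
        refine ⟨by rwa [hnn], fun hy => h2 ?_⟩
        have := (hBsymm (-y)).1 hy
        simpa using this
    rw [← hset, Measure.measure_preimage_neg]
  -- the three smallness facts
  have hx₀δ : volume (closedBall x₀ δ \ B)
      ≤ ENNReal.ofReal η₀ * volume (closedBall x₀ δ) :=
    hdens δ hδ (by rw [hδdef]; linarith)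
  have hx₀2δ : volume (closedBall x₀ (2*δ) \ B)
      ≤ ENNReal.ofReal η₀ * volume (closedBall x₀ (2*δ)) :=
    hdens (2*δ) (by linarith) (by rw [hδdef]; linarith)
  have hcbc : ∀ (p : EuclideanSpace ℝ (Fin d)) (r : ℝ),
      volume (closedBall p r) = volume (closedBall (0:EuclideanSpace ℝ (Fin d)) r) :=
    fun p r => Measure.addHaar_closedBall_center volume p r
  have hp_step : ∀ p : EuclideanSpace ℝ (Fin d),
      volume (closedBall p δ \ B) ≤ ENNReal.ofReal η₀ * volume (closedBall p δ) →
      volume (closedBall p δ \ B)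
        ≤ volume (closedBall (0:EuclideanSpace ℝ (Fin d)) (δ/4)) / 2 := by
    intro p hp
    refine hp.trans ?_
    rw [hcbc, hvol δ hδ.le, hvol (δ/4) (by positivity), ← mul_assoc,
      ← ENNReal.ofReal_mul hη₀pos.le]
    refine ofReal_mul_le_half (by positivity) ?_ ι
    have hq : (δ/4:ℝ)^d = δ^d * (4:ℝ)⁻¹^d := by
      rw [div_eq_mul_inv, mul_pow]
    rw [hη₀def, hq]
    have h1 : 0 ≤ (4:ℝ)⁻¹^d * δ^d := by positivity
    nlinarith [h1]
  have hpx₀ : volume (closedBall x₀ δ \ B)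
      ≤ volume (closedBall (0:EuclideanSpace ℝ (Fin d)) (δ/4)) / 2 := hp_step x₀ hx₀δ
  have hpnegx₀ : volume (closedBall (-x₀) δ \ B)
      ≤ volume (closedBall (0:EuclideanSpace ℝ (Fin d)) (δ/4)) / 2 := by
    rw [hnegeq]; exact hp_step x₀ hx₀δ
  have hsmall : volume (closedBall x₀ δ \ B) + volume (closedBall (-x₀) (2*δ) \ B)
      ≤ volume (closedBall (0:EuclideanSpace ℝ (Fin d)) δ) / 2 := by
    have h1 : volume (closedBall x₀ δ \ B) + volume (closedBall (-x₀) (2*δ) \ B)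
        ≤ ENNReal.ofReal η₀ * volume (closedBall x₀ δ)
          + ENNReal.ofReal η₀ * volume (closedBall x₀ (2*δ)) := by
      refine add_le_add hx₀δ ?_
      rw [hnegeq]; exact hx₀2δ
    refine h1.trans ?_
    rw [hcbc x₀ δ, hcbc x₀ (2*δ), hvol δ hδ.le, hvol (2*δ) (by positivity), ← mul_assoc, ← mul_assoc,
      ← ENNReal.ofReal_mul hη₀pos.le, ← ENNReal.ofReal_mul hη₀pos.le, ← add_mul,
      ← ENNReal.ofReal_add (by positivity) (by positivity)]
    refine ofReal_mul_le_half (by positivity) ?_ ι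
    have hq : ((2:ℝ)*δ)^d = 2^d * δ^d := mul_pow 2 δ d
    rw [hη₀def, hq]
    have h1 : (4:ℝ)⁻¹^d ≤ 1 := pow_le_one₀ (by norm_num) (by norm_num)
    have h2 : (4:ℝ)⁻¹^d * 2^d = (2:ℝ)⁻¹^d := by
      rw [← mul_pow]; norm_num
    have h3 : (2:ℝ)⁻¹^d ≤ 1 := pow_le_one₀ (by norm_num) (by norm_num)
    have hδd : (0:ℝ) ≤ δ^d := by positivity
    have e1 : (4:ℝ)⁻¹^d * δ^d ≤ δ^d := by nlinarith
    have e2 : (4:ℝ)⁻¹^d * (2^d * δ^d) ≤ δ^d := by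
      have : (4:ℝ)⁻¹^d * (2^d * δ^d) = ((2:ℝ)⁻¹^d) * δ^d := by rw [← h2]; ring
      rw [this]; nlinarith
    nlinarith [e1, e2]
  -- base case and abbreviations
  set W : ℝ≥0∞ := volume (closedBall (0:EuclideanSpace ℝ (Fin d)) δ) with hWdef
  set V : ℝ≥0∞ := volume (closedBall (0:EuclideanSpace ℝ (Fin d)) (δ/4)) with hVdef
  have hWpos : 0 < W := measure_closedBall_pos volume _ hδ
  have hWfin : W < ⊤ := measure_closedBall_lt_top
  have hVpos : 0 < V := measure_closedBall_pos volume _ (by positivity)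
  have hVfin : V < ⊤ := measure_closedBall_lt_top
  have hWhalf : 0 < (W/2).toReal := by
    refine ENNReal.toReal_pos ?_ ?_
    · simp [ENNReal.div_eq_zero_iff, hWpos.ne']
    · simp [ENNReal.div_eq_top, hWfin.ne]
  have hVhalf : 0 < (V/2).toReal := by
    refine ENNReal.toReal_pos ?_ ?_
    · simp [ENNReal.div_eq_zero_iff, hVpos.ne']
    · simp [ENNReal.div_eq_top, hVfin.ne]
  have hbase := base_lemma f hmeas hnonneg hIntf hC₀ hBmeas hBfin ha.le hfB hδ hsmall
  have hprops := convIter_props f hmeas hnonneg hIntf hC₀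
  have hstep : ∀ (n : ℕ) (c : ℝ), 0 ≤ c → ∀ (z : EuclideanSpace ℝ (Fin d)) (r : ℝ),
      δ/4 ≤ r → (∀ x ∈ closedBall z r, c ≤ convIter f n x) →
      ∀ p : EuclideanSpace ℝ (Fin d), volume (closedBall p δ \ B) ≤ V/2 →
      ∀ x ∈ closedBall (z+p) (r+δ/2), c * a * (V/2).toReal ≤ convIter f (n+1) x := by
    intro n c hc z r hr hglb p hp x hx
    obtain ⟨hmn, hn0, C, hC0n, hCn⟩ := hprops n
    have := step_lemma f (convIter f n) hmeas hnonneg hIntf hBmeas hBfin ha.le hfB hδ hp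
      hmn hn0 hCn hc hr hglb x hx
    simpa [convIter] using this
  -- main induction
  have hmain : ∀ k : ℕ, ∃ c : ℝ, 0 < c ∧
      ∀ x ∈ closedBall (0:EuclideanSpace ℝ (Fin d)) (δ + k*δ), c ≤ convIter f (2*k+1) x := by
    intro k
    induction k with
    | zero =>
      refine ⟨a * a * (W/2).toReal, by positivity, ?_⟩
      intro x hx
      have hx' : x ∈ closedBall (0:EuclideanSpace ℝ (Fin d)) δ := by
        simpa using hx
      have := hbase x hx'
      simpa [convIter] using this
    | succ k ih =>
      obtain ⟨c, hc, hlb⟩ := ih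
      have h1 := hstep (2*k+1) c hc.le 0 (δ + k*δ)
        (by have h9 : (0:ℝ) ≤ (k:ℝ)*δ := mul_nonneg (Nat.cast_nonneg k) hδ.le
            linarith) hlb x₀ hpx₀
      have h1' : ∀ x ∈ closedBall x₀ (δ + k*δ + δ/2),
          c * a * (V/2).toReal ≤ convIter f (2*k+2) x := by
        intro x hx
        have := h1 x (by simpa using hx)
        simpa using this
      have h2 := hstep (2*k+2) (c * a * (V/2).toReal)
        (by positivity) x₀ (δ + k*δ + δ/2)
        (by have h9 : (0:ℝ) ≤ (k:ℝ)*δ := mul_nonneg (Nat.cast_nonneg k) hδ.le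
            linarith) h1' (-x₀) hpnegx₀
      refine ⟨c * a * (V/2).toReal * a * (V/2).toReal, by positivity, ?_⟩
      intro x hx
      have hx' : x ∈ closedBall (x₀ + -x₀) (δ + k*δ + δ/2 + δ/2) := by
        have h0 : x₀ + -x₀ = (0:EuclideanSpace ℝ (Fin d)) := by abel
        rw [h0]
        refine closedBall_subset_closedBall ?_ hx
        push_cast; linarith
      have h3 := h2 x hx'
      have hidx : 2*(k+1)+1 = (2*k+2)+1 := by ring
      rw [hidx]
      exact h3
  -- conclusion
  obtain ⟨k, hk⟩ : ∃ k : ℕ, R ≤ δ + k*δ := by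
    refine ⟨⌈R/δ⌉₊, ?_⟩
    have h1 : R/δ ≤ (⌈R/δ⌉₊ : ℝ) := Nat.le_ceil _
    have h2 : R = (R/δ)*δ := (div_mul_cancel₀ R hδ.ne').symm
    nlinarith
  obtain ⟨c, hc, hlb⟩ := hmain k
  refine ⟨2*k+2, by omega, c, hc, fun x hx => ?_⟩
  have hpow : convPow f (2*k+2) = convIter f (2*k+1) := by
    simp [convPow]
  rw [hpow]
  refine hlb x ?_
  rw [mem_closedBall_zero_iff]
  linarith
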